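/- If (Δ_{P_A,γ_A} ⊗ I_B)(ρ_{AB}) = ρ_{AB} for a bipartite state ρ_{AB}, then ρ_{AB} is separable and can be written as ρ_{AB} = Σ_i λ_i (Σ_y c_y^i Π_y γ_A) ⊗ σ_B^i with λ_i ≥ 0, Σ_i λ_i = 1, c_y^i ≥ 0, and states σ_B^i; conversely, any state of that form is a fixed point of Δ_{P_A,γ_A} ⊗ I_B. -/

import Mathlib

open Matrix BigOperators Filter
open scoped ComplexOrder Kronecker Classical

abbrev Mat (d : ℕ) := Matrix (Fin d) (Fin d) ℂ

def IsPOVM {X : Type*} [Fintype X] {d : ℕ} (P : X → Mat d) : Prop :=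
  (∀ x, (P x).PosSemidef) ∧ ∑ x, P x = 1

def IsPVM {X : Type*} [Fintype X] {d : ℕ} (P : X → Mat d) : Prop :=
  IsPOVM P ∧ (∀ x, P x * P x = P x) ∧ ∀ x y, x ≠ y → P x * P y = 0

def IsDensity {d : ℕ} (ρ : Mat d) : Prop := ρ.PosSemidef ∧ ρ.trace = 1

/-- `Q ⪯ P`: `Q` is a classical post-processing of `P`. -/
def IsPostProcessingOf {Y X : Type*} [Fintype Y] [Fintype X] {d : ℕ}
    (Q : Y → Mat d) (P : X → Mat d) : Prop :=
  ∃ p : X → Y → ℝ, (∀ x y, 0 ≤ p x y) ∧ (∀ x, ∑ y, p x y = 1) ∧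
    ∀ y, Q y = ∑ x, (p x y : ℂ) • P x

/-- The coarse-graining map `C_{P,γ}(ρ) = ∑_x Tr[P_x ρ] γ^{1/2} P_x γ^{1/2} / Tr[P_x γ]`. -/
noncomputable def coarseMap {X : Type*} [Fintype X] {d : ℕ}
    (P : X → Mat d) {γ : Mat d} (hγ : γ.PosSemidef) : Mat d → Mat d :=
  fun ρ => ∑ x, ((P x * ρ).trace / (P x * γ).trace) • ((hγ.1.eigenvectorUnitary.1 * diagonal ((RCLike.ofReal : ℝ → ℂ) ∘ (√·) ∘ hγ.1.eigenvalues) *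
        (star hγ.1.eigenvectorUnitary : Mat d)) * P x *
      (hγ.1.eigenvectorUnitary.1 * diagonal ((RCLike.ofReal : ℝ → ℂ) ∘ (√·) ∘ hγ.1.eigenvalues) *
        (star hγ.1.eigenvectorUnitary : Mat d)))

/-- The resource-destroying map `Δ(ρ) = ∑_y Tr[Π_y ρ] Π_y γ / Tr[Π_y γ]`. -/
noncomputable def deltaMap {Y : Type*} [Fintype Y] {d : ℕ}
    (Pv : Y → Mat d) (γ : Mat d) : Mat d → Mat d :=
  fun ρ => ∑ y, ((Pv y * ρ).trace / (Pv y * γ).trace) • (Pv y * γ)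

/-- Apply `Φ` blockwise to a `k × k` block matrix, i.e. `(id_k ⊗ Φ)`. -/
def blockApply {d : ℕ} (Φ : Mat d → Mat d) (k : ℕ)
    (M : Matrix (Fin k × Fin d) (Fin k × Fin d) ℂ) :
    Matrix (Fin k × Fin d) (Fin k × Fin d) ℂ :=
  Matrix.of fun p q => Φ (Matrix.of fun a b => M (p.1, a) (q.1, b)) p.2 q.2

/-- Complete positivity: `id_k ⊗ Φ` preserves positive semidefiniteness for all `k`. -/
def IsCompletelyPositive {d : ℕ} (Φ : Mat d → Mat d) : Prop :=
  ∀ (k : ℕ) (M : Matrix (Fin k × Fin d) (Fin k × Fin d) ℂ),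
    M.PosSemidef → (blockApply Φ k M).PosSemidef

/-- `Pv` is a maximal γ-commuting projective post-processing (MPPP) of `P`:
a PVM, a classical post-processing of `P`, commuting with `γ`, and maximal
among all such PVMs with respect to classical post-processing. -/
def IsMPPP {Y X : Type*} [Fintype Y] [Fintype X] {d : ℕ}
    (Pv : Y → Mat d) (P : X → Mat d) (γ : Mat d) : Prop :=
  IsPVM Pv ∧ (∀ y, Pv y * γ = γ * Pv y) ∧ IsPostProcessingOf Pv P ∧
    ∀ (Y' : Type) [Fintype Y'] (Pv' : Y' → Mat d),
      IsPVM Pv' → (∀ y, Pv' y * γ = γ * Pv' y) → IsPostProcessingOf Pv' P →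
        IsPostProcessingOf Pv' Pv

/-- The local map `Δ ⊗ id_B` acting on a bipartite matrix. -/
noncomputable def deltaTensorId {Y : Type*} [Fintype Y] {dA dB : ℕ}
    (Pv : Y → Mat dA) (γA : Mat dA)
    (ρAB : Matrix (Fin dA × Fin dB) (Fin dA × Fin dB) ℂ) :
    Matrix (Fin dA × Fin dB) (Fin dA × Fin dB) ℂ :=
  Matrix.of fun p q =>
    deltaMap Pv γA (Matrix.of fun a a' => ρAB (a, p.2) (a', q.2)) p.1 q.1


section AuxLemmas

lemma trace_conjT_mul {d : ℕ} (B : Mat d) :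
    (Bᴴ * B).trace = ∑ j, ∑ i, star (B i j) * B i j := by
  simp [Matrix.trace, Matrix.diag, Matrix.mul_apply, Matrix.conjTranspose_apply]

lemma psd_trace_nonneg {d : ℕ} {M : Mat d} (h : M.PosSemidef) : 0 ≤ M.trace := by
  exact h.trace_nonneg

lemma psd_trace_eq_zero {d : ℕ} {M : Mat d} (h : M.PosSemidef) (ht : M.trace = 0) :
    M = 0 := by
  exact h.trace_eq_zero_iff.mp ht

lemma psd_trace_real {d : ℕ} {M : Mat d} (h : M.PosSemidef) :
    ((M.trace.re : ℂ)) = M.trace := by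
  have h0 := psd_trace_nonneg h
  rw [Complex.nonneg_iff] at h0
  exact Complex.ext (by simp) (by simp [← h0.2])

lemma psd_smul_real {d : ℕ} {M : Mat d} (h : M.PosSemidef) {c : ℝ} (hc : 0 ≤ c) :
    ((c : ℂ) • M).PosSemidef := by
  refine Matrix.PosSemidef.of_dotProduct_mulVec_nonneg ?_ ?_
  · ext i j
    simp [Matrix.conjTranspose_apply, h.isHermitian.apply, Complex.conj_ofReal, mul_comm]
  · intro x
    have hs : star x ⬝ᵥ ((c : ℂ) • M) *ᵥ x = (c : ℂ) * (star x ⬝ᵥ M *ᵥ x) := by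
      simp [Matrix.smul_mulVec, dotProduct_smul]
    rw [hs]
    exact mul_nonneg (by exact_mod_cast Complex.zero_le_real.mpr hc) (h.dotProduct_mulVec_nonneg x)

lemma Pg_psd {d : ℕ} {Pi γ : Mat d} (hPi : Pi.PosSemidef) (hidem : Pi * Pi = Pi)
    (hcomm : Pi * γ = γ * Pi) (hγ : γ.PosSemidef) : (Pi * γ).PosSemidef := by
  have key : Pi * γ = Pi * γ * Piᴴ := by
    rw [hPi.isHermitian.eq, mul_assoc, ← hcomm, ← mul_assoc, hidem]
  rw [key]
  exact hγ.mul_mul_conjTranspose_same Pi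

lemma sum4_swap {α β γ δ : Type*} [Fintype α] [Fintype β] [Fintype γ] [Fintype δ]
    (f : α → β → γ → δ → ℂ) :
    ∑ a, ∑ b, ∑ c, ∑ d, f a b c d = ∑ c, ∑ d, ∑ a, ∑ b, f a b c d := by
  calc ∑ a, ∑ b, ∑ c, ∑ d, f a b c d
      = ∑ p : α × β, ∑ q : γ × δ, f p.1 p.2 q.1 q.2 := by
        simp [Fintype.sum_prod_type]
    _ = ∑ q : γ × δ, ∑ p : α × β, f p.1 p.2 q.1 q.2 := Finset.sum_comm
    _ = ∑ c, ∑ d, ∑ a, ∑ b, f a b c d := by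
        simp [Fintype.sum_prod_type]

lemma mul_double_sum {α β : Type*} [Fintype α] [Fintype β] (c d : ℂ) (g : α → β → ℂ) :
    c * ((∑ a, ∑ b, g a b) * d) = ∑ a, ∑ b, c * d * g a b := by
  rw [Finset.sum_mul, Finset.mul_sum]
  refine Finset.sum_congr rfl fun a _ => ?_
  rw [Finset.sum_mul, Finset.mul_sum]
  exact Finset.sum_congr rfl fun b _ => by ring

lemma mul_double_sum' {α β : Type*} [Fintype α] [Fintype β] (c : ℂ) (g : α → β → ℂ) :
    c * (∑ a, ∑ b, g a b) = ∑ a, ∑ b, c * g a b := by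
  rw [Finset.mul_sum]
  exact Finset.sum_congr rfl fun a _ => Finset.mul_sum _ _ _

lemma tau_psd {dA dB : ℕ} (ρ : Matrix (Fin dA × Fin dB) (Fin dA × Fin dB) ℂ)
    (hρ : ρ.PosSemidef) (Pi : Mat dA) (hPi : Pi.PosSemidef) (hidem : Pi * Pi = Pi) :
    (Matrix.of fun b b' => (Pi * (Matrix.of fun a a' => ρ (a, b) (a', b'))).trace :
      Mat dB).PosSemidef := by
  have hent : ∀ b b' : Fin dB,
      (Pi * (Matrix.of fun a a' => ρ (a, b) (a', b'))).trace
        = ∑ a, ∑ a', Pi a a' * ρ (a', b) (a, b') := by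
    intro b b'
    simp [Matrix.trace, Matrix.diag, Matrix.mul_apply]
  refine Matrix.PosSemidef.of_dotProduct_mulVec_nonneg ?_ ?_
  · refine Matrix.IsHermitian.ext fun b b' => ?_
    simp only [Matrix.of_apply, hent, star_sum, star_mul']
    calc ∑ a, ∑ a', star (Pi a a') * star (ρ (a', b') (a, b))
        = ∑ a, ∑ a', Pi a' a * ρ (a, b) (a', b') := by
          refine Finset.sum_congr rfl fun a _ => Finset.sum_congr rfl fun a' _ => ?_
          rw [hPi.1.apply, hρ.1.apply]
      _ = ∑ a', ∑ a, Pi a' a * ρ (a, b) (a', b') := Finset.sum_comm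
  · intro x
    set M : Mat dA := Matrix.of fun c d =>
      ∑ b, ∑ b', star (x b) * x b' * ρ (c, b) (d, b') with hMdef
    have hMent : ∀ c d, M c d = ∑ b, ∑ b', star (x b) * x b' * ρ (c, b) (d, b') :=
      fun c d => rfl
    have hM : M.PosSemidef := by
      refine Matrix.PosSemidef.of_dotProduct_mulVec_nonneg ?_ ?_
      · refine Matrix.IsHermitian.ext fun c d => ?_
        simp only [hMent, star_sum, star_mul']
        calc ∑ b, ∑ b', star (star (x b)) * star (x b') * star (ρ (d, b) (c, b'))
            = ∑ b, ∑ b', x b * star (x b') * ρ (c, b') (d, b) := by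
              refine Finset.sum_congr rfl fun b _ => Finset.sum_congr rfl fun b' _ => ?_
              rw [hρ.1.apply, star_star]
          _ = ∑ b', ∑ b, x b * star (x b') * ρ (c, b') (d, b) := Finset.sum_comm
          _ = ∑ b, ∑ b', star (x b) * x b' * ρ (c, b) (d, b') := by
              refine Finset.sum_congr rfl fun b _ => Finset.sum_congr rfl fun b' _ => by ring
      · intro u
        set w : Fin dA × Fin dB → ℂ := fun p => u p.1 * x p.2 with hw
        have key : star u ⬝ᵥ M *ᵥ u = star w ⬝ᵥ ρ *ᵥ w := by
          have L : star u ⬝ᵥ M *ᵥ u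
              = ∑ c, ∑ d, ∑ b, ∑ b',
                  star (u c) * u d * (star (x b) * x b' * ρ (c, b) (d, b')) := by
            show (∑ c, star (u c) * ∑ d, M c d * u d) = _
            refine Finset.sum_congr rfl fun c _ => ?_
            rw [Finset.mul_sum]
            refine Finset.sum_congr rfl fun d _ => ?_
            rw [hMent, mul_double_sum]
          have R : star w ⬝ᵥ ρ *ᵥ w
              = ∑ c, ∑ d, ∑ b, ∑ b',
                  star (u c) * u d * (star (x b) * x b' * ρ (c, b) (d, b')) := by
            show (∑ p : Fin dA × Fin dB, star (w p) * ∑ q : Fin dA × Fin dB, ρ p q * w q) = _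
            simp only [Fintype.sum_prod_type]
            refine Eq.trans (Finset.sum_congr rfl fun c _ => ?_)
              (Finset.sum_congr rfl fun c _ => Finset.sum_comm)
            refine Finset.sum_congr rfl fun b _ => ?_
            rw [mul_double_sum']
            refine Finset.sum_congr rfl fun d _ => Finset.sum_congr rfl fun b' _ => ?_
            simp only [hw, star_mul']
            ring
          rw [L, R]
        rw [key]
        exact hρ.dotProduct_mulVec_nonneg w
    have key2 : star x ⬝ᵥ (Matrix.of fun b b' =>
        (Pi * (Matrix.of fun a a' => ρ (a, b) (a', b'))).trace : Mat dB) *ᵥ x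
        = (Pi * M * Piᴴ).trace := by
      have e3 : (Pi * M * Piᴴ).trace = (Pi * M).trace := by
        rw [hPi.1.eq, Matrix.trace_mul_comm (Pi * M) Pi, ← mul_assoc, hidem]
      have e2 : (Pi * M).trace = ∑ a, ∑ a', Pi a a' * M a' a := by
        simp [Matrix.trace, Matrix.diag, Matrix.mul_apply]
      have L : star x ⬝ᵥ (Matrix.of fun b b' =>
          (Pi * (Matrix.of fun a a' => ρ (a, b) (a', b'))).trace : Mat dB) *ᵥ x
          = ∑ b, ∑ b', ∑ a, ∑ a', star (x b) * x b' * (Pi a a' * ρ (a', b) (a, b')) := by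
        show (∑ b, star (x b) *
          ∑ b', (Pi * (Matrix.of fun a a' => ρ (a, b) (a', b'))).trace * x b') = _
        refine Finset.sum_congr rfl fun b _ => ?_
        rw [Finset.mul_sum]
        refine Finset.sum_congr rfl fun b' _ => ?_
        rw [hent, mul_double_sum]
      have R : (∑ a, ∑ a', Pi a a' * M a' a)
          = ∑ b, ∑ b', ∑ a, ∑ a', star (x b) * x b' * (Pi a a' * ρ (a', b) (a, b')) := by
        rw [show (∑ a, ∑ a', Pi a a' * M a' a)
            = ∑ a, ∑ a', ∑ b, ∑ b', Pi a a' * (star (x b) * x b' * ρ (a', b) (a, b')) from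
          Finset.sum_congr rfl fun a _ => Finset.sum_congr rfl fun a' _ => by
            rw [hMent, mul_double_sum']]
        rw [sum4_swap]
        refine Finset.sum_congr rfl fun b _ => Finset.sum_congr rfl fun b' _ =>
          Finset.sum_congr rfl fun a _ => Finset.sum_congr rfl fun a' _ => by ring
      rw [e3, e2, L, R]
    rw [key2]
    exact psd_trace_nonneg (hM.mul_mul_conjTranspose_same Pi)

section Maps
variable {Y : Type*} [Fintype Y]

lemma deltaMap_smul {d : ℕ} (Pv : Y → Mat d) (γ : Mat d) (c : ℂ) (ρ : Mat d) :
    deltaMap Pv γ (c • ρ) = c • deltaMap Pv γ ρ := by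
  unfold deltaMap
  rw [Finset.smul_sum]
  refine Finset.sum_congr rfl fun y _ => ?_
  rw [Matrix.mul_smul, Matrix.trace_smul, smul_eq_mul, mul_div_assoc, mul_smul]

lemma deltaMap_sum {d : ℕ} (Pv : Y → Mat d) (γ : Mat d) {ι : Type*} (s : Finset ι)
    (f : ι → Mat d) :
    deltaMap Pv γ (∑ i ∈ s, f i) = ∑ i ∈ s, deltaMap Pv γ (f i) := by
  unfold deltaMap
  rw [Finset.sum_comm]
  refine Finset.sum_congr rfl fun y _ => ?_
  rw [Finset.mul_sum, trace_sum, Finset.sum_div, Finset.sum_smul]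

lemma deltaMap_Pg {d : ℕ} (Pv : Y → Mat d) (γ : Mat d)
    (hidem : ∀ y, Pv y * Pv y = Pv y)
    (horth : ∀ y y', y ≠ y' → Pv y * Pv y' = 0)
    (hPg0 : ∀ y, (Pv y * γ).trace = 0 → Pv y * γ = 0)
    (y : Y) : deltaMap Pv γ (Pv y * γ) = Pv y * γ := by
  unfold deltaMap
  rw [Finset.sum_eq_single y]
  · by_cases h0 : (Pv y * γ).trace = 0
    · simp [hPg0 y h0]
    · rw [← mul_assoc, hidem y, div_self h0, one_smul]
  · intro y' _ hne
    rw [← mul_assoc, horth y' y hne]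
    simp
  · simp

lemma deltaTensorId_kron {dA dB : ℕ} (Pv : Y → Mat dA) (γ : Mat dA)
    (A : Mat dA) (B : Mat dB) :
    deltaTensorId Pv γ (A ⊗ₖ B) = (deltaMap Pv γ A) ⊗ₖ B := by
  ext p q
  show deltaMap Pv γ (Matrix.of fun a a' => (A ⊗ₖ B) (a, p.2) (a', q.2)) p.1 q.1 = _
  have hb : (Matrix.of fun a a' => (A ⊗ₖ B) (a, p.2) (a', q.2)) = B p.2 q.2 • A := by
    ext a a'
    simp [Matrix.kroneckerMap_apply, mul_comm]
  rw [hb, deltaMap_smul]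
  simp [Matrix.kroneckerMap_apply, mul_comm]

lemma deltaTensorId_sum {dA dB : ℕ} (Pv : Y → Mat dA) (γ : Mat dA) {ι : Type*} (s : Finset ι)
    (f : ι → Matrix (Fin dA × Fin dB) (Fin dA × Fin dB) ℂ) :
    deltaTensorId Pv γ (∑ i ∈ s, f i) = ∑ i ∈ s, deltaTensorId Pv γ (f i) := by
  ext p q
  show deltaMap Pv γ (Matrix.of fun a a' => (∑ i ∈ s, f i) (a, p.2) (a', q.2)) p.1 q.1 = _
  have hb : (Matrix.of fun a a' => (∑ i ∈ s, f i) (a, p.2) (a', q.2))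
      = ∑ i ∈ s, Matrix.of fun a a' => f i (a, p.2) (a', q.2) := by
    ext a a'
    simp [Matrix.sum_apply]
  rw [hb, deltaMap_sum]
  rw [show ((∑ i ∈ s, deltaTensorId Pv γ (f i)) p q)
      = ∑ i ∈ s, deltaTensorId Pv γ (f i) p q from by simp [Matrix.sum_apply],
    Matrix.sum_apply]
  exact Finset.sum_congr rfl fun i _ => rfl

lemma deltaTensorId_smul {dA dB : ℕ} (Pv : Y → Mat dA) (γ : Mat dA) (c : ℂ)
    (M : Matrix (Fin dA × Fin dB) (Fin dA × Fin dB) ℂ) :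
    deltaTensorId Pv γ (c • M) = c • deltaTensorId Pv γ M := by
  ext p q
  show deltaMap Pv γ (Matrix.of fun a a' => (c • M) (a, p.2) (a', q.2)) p.1 q.1 = _
  have hb : (Matrix.of fun a a' => (c • M) (a, p.2) (a', q.2))
      = c • Matrix.of fun a a' => M (a, p.2) (a', q.2) := by
    ext a a'; simp
  rw [hb, deltaMap_smul]
  simp [deltaTensorId]

end Maps

end AuxLemmas

/-- a bipartite state `ρ_AB` satisfies
`(Δ_{P_A,γ_A} ⊗ I_B)(ρ_AB) = ρ_AB` iff it is a separable state of the form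
`∑_i λ_i (∑_y c_y^i Π_y γ_A) ⊗ σ_B^i`. -/
theorem locally_macroscopic_iff_separable_form {X Y : Type*} [Fintype X] [Fintype Y]
    {dA dB : ℕ}
    (P : X → Mat dA) (γA : Mat dA) (Pv : Y → Mat dA)
    (ρAB : Matrix (Fin dA × Fin dB) (Fin dA × Fin dB) ℂ)
    (hP : IsPOVM P) (hγ : γA.PosDef) (hγ1 : γA.trace = 1)
    (hmppp : IsMPPP Pv P γA)
    (hρ : ρAB.PosSemidef) (hρ1 : ρAB.trace = 1) :
    deltaTensorId Pv γA ρAB = ρAB ↔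
      ∃ (m : ℕ) (lam : Fin m → ℝ) (c : Fin m → Y → ℝ) (σB : Fin m → Mat dB),
        (∀ i, 0 ≤ lam i) ∧ (∑ i, lam i = 1) ∧
        (∀ i y, 0 ≤ c i y) ∧
        (∀ i, IsDensity (∑ y, (c i y : ℂ) • (Pv y * γA))) ∧
        (∀ i, IsDensity (σB i)) ∧
        ρAB = ∑ i, (lam i : ℂ) •
          ((∑ y, (c i y : ℂ) • (Pv y * γA)) ⊗ₖ σB i) := by
  obtain ⟨⟨⟨hpsdPv, hsumP⟩, hidem, horth⟩, hcomm, -, -⟩ := hmppp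
  have hPg : ∀ y, (Pv y * γA).PosSemidef :=
    fun y => Pg_psd (hpsdPv y) (hidem y) (hcomm y) hγ.posSemidef
  have hPg0 : ∀ y, (Pv y * γA).trace = 0 → Pv y * γA = 0 :=
    fun y h0 => psd_trace_eq_zero (hPg y) h0
  have hγdet : IsUnit γA.det := hγ.det_pos.ne'.isUnit
  have hPv0 : ∀ y, Pv y * γA = 0 → Pv y = 0 := by
    intro y h0
    have h1 : Pv y * γA * γA⁻¹ = 0 * γA⁻¹ := by rw [h0]
    rwa [mul_assoc, Matrix.mul_nonsing_inv _ hγdet, mul_one, Matrix.zero_mul] at h1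
  constructor
  · -- forward direction
    intro h
    have hdB : 0 < dB := by
      rcases Nat.eq_zero_or_pos dB with h0 | h0
      · exfalso
        subst h0
        rw [show ρAB.trace = 0 from by simp [Matrix.trace]] at hρ1
        exact zero_ne_one hρ1
      · exact h0
    have hdA : 0 < dA := by
      rcases Nat.eq_zero_or_pos dA with h0 | h0
      · exfalso
        subst h0
        rw [show ρAB.trace = 0 from by simp [Matrix.trace]] at hρ1
        exact zero_ne_one hρ1
      · exact h0
    have hγne : γA ≠ 0 := by
      intro h0
      have hd := hγ.det_pos
      haveI : Nonempty (Fin dA) := ⟨(⟨0, hdA⟩ : Fin dA)⟩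
      rw [h0, Matrix.det_zero] at hd
      exact lt_irrefl 0 hd
    have hy0 : ∃ y0, Pv y0 * γA ≠ 0 := by
      by_contra hno
      push_neg at hno
      apply hγne
      calc γA = (∑ y, Pv y) * γA := by rw [hsumP, one_mul]
        _ = ∑ y, Pv y * γA := Finset.sum_mul _ _ _
        _ = 0 := by simp [hno]
    obtain ⟨y0, hy0'⟩ := hy0
    set t : Y → ℂ := fun y => (Pv y * γA).trace with htdef
    have hty0 : t y0 ≠ 0 := fun h0 => hy0' (hPg0 y0 h0)
    set blk : Fin dB → Fin dB → Mat dA :=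
      fun b b' => Matrix.of fun a a' => ρAB (a, b) (a', b') with hblk
    set τ : Y → Mat dB := fun y => Matrix.of fun b b' => (Pv y * blk b b').trace with hτ
    have hτpsd : ∀ y, (τ y).PosSemidef :=
      fun y => tau_psd ρAB hρ (Pv y) (hpsdPv y) (hidem y)
    have hτ0 : ∀ y, Pv y = 0 → τ y = 0 := by
      intro y h0
      ext b b'
      simp [hτ, h0]
    have htreal : ∀ y, ((t y).re : ℂ) = t y := fun y => psd_trace_real (hPg y)
    have hτreal : ∀ y, (((τ y).trace.re : ℂ)) = (τ y).trace := fun y => psd_trace_real (hτpsd y)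
    have hτnn : ∀ y, 0 ≤ ((τ y).trace.re) := by
      intro y
      have := psd_trace_nonneg (hτpsd y)
      rw [Complex.nonneg_iff] at this
      exact this.1
    have htnn : ∀ y, 0 ≤ (t y).re := by
      intro y
      have := psd_trace_nonneg (hPg y)
      rw [Complex.nonneg_iff] at this
      exact this.1
    have hfix : ∀ p q : Fin dA × Fin dB, ρAB p q
        = ∑ y, (τ y p.2 q.2 / t y) * (Pv y * γA) p.1 q.1 := by
      intro p q
      conv_lhs => rw [← h]
      show deltaMap Pv γA (blk p.2 q.2) p.1 q.1 = _
      unfold deltaMap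
      rw [Matrix.sum_apply]
      refine Finset.sum_congr rfl fun y _ => ?_
      simp [hτ, htdef]
    have hsumτ : ∑ y, (τ y).trace = 1 := by
      have e1 : ∀ y, (τ y).trace = ∑ b, (Pv y * blk b b).trace := by
        intro y
        simp [hτ, Matrix.trace, Matrix.diag]
      have e2 : ∀ b, (blk b b).trace = ∑ a, ρAB (a, b) (a, b) := by
        intro b
        simp [hblk, Matrix.trace, Matrix.diag]
      calc ∑ y, (τ y).trace = ∑ y, ∑ b, (Pv y * blk b b).trace :=
            Finset.sum_congr rfl fun y _ => e1 y
        _ = ∑ b, ∑ y, (Pv y * blk b b).trace := Finset.sum_comm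
        _ = ∑ b, (blk b b).trace := by
            refine Finset.sum_congr rfl fun b _ => ?_
            rw [← trace_sum, ← Finset.sum_mul, hsumP, one_mul]
        _ = ∑ b, ∑ a, ρAB (a, b) (a, b) := Finset.sum_congr rfl fun b _ => e2 b
        _ = ∑ a, ∑ b, ρAB (a, b) (a, b) := Finset.sum_comm
        _ = ρAB.trace := by simp [Matrix.trace, Matrix.diag, Fintype.sum_prod_type]
        _ = 1 := hρ1
    set ybar : Y → Y := fun y => if t y = 0 then y0 else y with hybar
    have htybar : ∀ y, t (ybar y) ≠ 0 := by
      intro y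
      by_cases hy : t y = 0 <;> simp [hybar, hy, hty0]
    set b0 : Fin dB := ⟨0, hdB⟩ with hb0
    set σ0 : Mat dB := Matrix.diagonal (fun b => if b = b0 then 1 else 0) with hσ0
    have hσ0dens : IsDensity σ0 := by
      constructor
      · refine Matrix.PosSemidef.diagonal ?_
        intro b
        by_cases hb : b = b0 <;> simp [hb]
      · simp [hσ0, Matrix.trace_diagonal]
    set lamY : Y → ℝ := fun y => ((τ y).trace).re with hlamY
    set cY : Y → Y → ℝ :=
      fun y y' => if y' = ybar y then ((t (ybar y)).re)⁻¹ else 0 with hcY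
    set σY : Y → Mat dB :=
      fun y => if (τ y).trace = 0 then σ0 else (((lamY y : ℝ) : ℂ))⁻¹ • τ y with hσY
    set e : Fin (Fintype.card Y) ≃ Y := (Fintype.equivFin Y).symm with he
    have hAsum : ∀ y, (∑ y', ((cY y y' : ℝ) : ℂ) • (Pv y' * γA))
        = (t (ybar y))⁻¹ • (Pv (ybar y) * γA) := by
      intro y
      rw [Finset.sum_eq_single (ybar y)]
      · have hco : ((cY y (ybar y) : ℝ) : ℂ) = (t (ybar y))⁻¹ := by
          simp only [hcY, if_pos rfl]
          rw [Complex.ofReal_inv, htreal]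
        rw [hco]
      · intro y' _ hne
        simp [hcY, hne]
      · intro hmem
        exact absurd (Finset.mem_univ _) hmem
    refine ⟨Fintype.card Y, fun i => lamY (e i), fun i => cY (e i), fun i => σY (e i),
      ?_, ?_, ?_, ?_, ?_, ?_⟩
    · intro i
      exact hτnn (e i)
    · rw [Equiv.sum_comp e lamY]
      have : ((∑ y, lamY y : ℝ) : ℂ) = ((1 : ℝ) : ℂ) := by
        rw [Complex.ofReal_sum]
        rw [show (∑ y, ((lamY y : ℝ) : ℂ)) = ∑ y, (τ y).trace from
          Finset.sum_congr rfl fun y _ => hτreal y]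
        rw [hsumτ]
        norm_num
      exact_mod_cast this
    · intro i y'
      by_cases hy : y' = ybar (e i)
      · simp only [hcY, hy, if_pos rfl]
        exact inv_nonneg.mpr (htnn _)
      · simp [hcY, hy]
    · intro i
      rw [hAsum]
      set yb := ybar (e i)
      constructor
      · rw [show (t yb)⁻¹ • (Pv yb * γA) = (((((t yb).re)⁻¹ : ℝ)) : ℂ) • (Pv yb * γA) from by
          rw [Complex.ofReal_inv, htreal]]
        exact psd_smul_real (hPg yb) (inv_nonneg.mpr (htnn yb))
      · rw [Matrix.trace_smul, smul_eq_mul]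
        exact inv_mul_cancel₀ (htybar (e i))
    · intro i
      by_cases hz : (τ (e i)).trace = 0
      · simp only [hσY, if_pos hz]
        exact hσ0dens
      · have hlamne : ((lamY (e i) : ℝ) : ℂ) ≠ 0 := by
          rw [hτreal]
          exact hz
        simp only [hσY, if_neg hz]
        constructor
        · rw [show (((lamY (e i) : ℝ) : ℂ))⁻¹ • τ (e i)
              = ((((lamY (e i))⁻¹ : ℝ)) : ℂ) • τ (e i) from by rw [Complex.ofReal_inv]]
          refine psd_smul_real (hτpsd (e i)) (inv_nonneg.mpr (hτnn (e i)))
        · rw [Matrix.trace_smul, smul_eq_mul, hτreal]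
          exact inv_mul_cancel₀ hz
    · ext p q
      rw [hfix p q]
      rw [show ((∑ i, ((lamY (e i) : ℝ) : ℂ) •
            ((∑ y, ((cY (e i) y : ℝ) : ℂ) • (Pv y * γA)) ⊗ₖ σY (e i))) p q)
          = ∑ i, ((lamY (e i) : ℝ) : ℂ) *
            (((t (ybar (e i)))⁻¹ • (Pv (ybar (e i)) * γA)) p.1 q.1 * σY (e i) p.2 q.2) from by
        rw [Matrix.sum_apply]
        refine Finset.sum_congr rfl fun i _ => ?_
        rw [hAsum]
        simp [Matrix.kroneckerMap_apply]]
      rw [Equiv.sum_comp e (fun y => ((lamY y : ℝ) : ℂ) *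
        (((t (ybar y))⁻¹ • (Pv (ybar y) * γA)) p.1 q.1 * σY y p.2 q.2))]
      refine Finset.sum_congr rfl fun y _ => ?_
      by_cases hty : t y = 0
      · have hPvz : Pv y = 0 := hPv0 y (hPg0 y hty)
        have hτz : τ y = 0 := hτ0 y hPvz
        have hlz : ((lamY y : ℝ) : ℂ) = 0 := by
          rw [hτreal, hτz]
          simp
        rw [hlz, hPg0 y hty, hτz]
        simp
      · have hyb : ybar y = y := by simp [hybar, hty]
        by_cases hz : (τ y).trace = 0
        · have hτz : τ y = 0 := psd_trace_eq_zero (hτpsd y) hz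
          have hlz : ((lamY y : ℝ) : ℂ) = 0 := by
            rw [hτreal, hz]
          rw [hlz, hτz]
          simp
        · have hlam : ((lamY y : ℝ) : ℂ) = (τ y).trace := hτreal y
          have hlamne : ((lamY y : ℝ) : ℂ) ≠ 0 := by
            rw [hlam]
            exact hz
          rw [hyb]
          simp only [hσY, if_neg hz, Matrix.smul_apply, smul_eq_mul]
          field_simp
  · -- converse direction
    rintro ⟨m, lam, c, σB, hlam0, hlam1, hc0, hAdens, hσdens, rfl⟩
    rw [deltaTensorId_sum]
    refine Finset.sum_congr rfl fun i _ => ?_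
    rw [deltaTensorId_smul, deltaTensorId_kron]
    have hfixA : deltaMap Pv γA (∑ y, ((c i y : ℝ) : ℂ) • (Pv y * γA))
        = ∑ y, ((c i y : ℝ) : ℂ) • (Pv y * γA) := by
      rw [deltaMap_sum]
      refine Finset.sum_congr rfl fun y _ => ?_
      rw [deltaMap_smul, deltaMap_Pg Pv γA hidem horth hPg0 y]
    rw [hfixA]
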